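/- arXiv:0803.4022 — 7 statements merged into one kernel-verified Lean document; each statement's English description precedes it below -/
import Mathlib

section
/- Let A be a bounded linear operator on a real Hilbert space H and P a bounded operator such that T := PA is self-adjoint and nonnegative with N(T) = N(A). Suppose Ay = f and u₀ - y ⟂ N(A). Then the unique solution u(t) of u'(t) = -P(Au(t) - f), u(0) = u₀, converges in norm to y as t → ∞. -/
open Filter Topology

local notation "⟪" x ", " y "⟫" => @inner ℝ _ _ x y

-- helper: positive symmetric operator with zero quadratic form at w implies T w = 0
lemma pos_symm_inner_zero {H : Type*} [NormedAddCommGroup H] [InnerProductSpace ℝ H]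
    (T : H →L[ℝ] H) (hsym : ∀ x z : H, ⟪T x, z⟫ = ⟪x, T z⟫)
    (hpos : ∀ x : H, 0 ≤ ⟪T x, x⟫) (w : H) (hw : ⟪T w, w⟫ = 0) : T w = 0 := by
  have key : ∀ x : H, ⟪T w, x⟫ = 0 := by
    intro x
    set a : ℝ := ⟪T x, x⟫ with ha
    set b : ℝ := ⟪T w, x⟫ with hb
    have ha0 : 0 ≤ a := hpos x
    by_contra hb0
    have hq : ∀ r : ℝ, 0 ≤ 2 * r * b + r ^ 2 * a := by
      intro r
      have := hpos (w + r • x)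
      have hexp : ⟪T (w + r • x), w + r • x⟫ = 2 * r * b + r ^ 2 * a := by
        have h1 : ⟪T x, w⟫ = b := by rw [hsym, real_inner_comm]
        simp only [map_add, map_smul, inner_add_add_self, inner_add_left, inner_add_right,
          real_inner_smul_left, real_inner_smul_right]
        rw [hw, h1]
        ring
      linarith [hexp ▸ this]
    have hden : (0:ℝ) < a + 1 := by linarith
    have hb2 : 0 < b ^ 2 := by positivity
    have h := hq (-(b / (a + 1)))
    have heq : 2 * (-(b / (a + 1))) * b + (-(b / (a + 1))) ^ 2 * a
        = (b ^ 2 / (a + 1) ^ 2) * (-(a + 2)) := by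
      field_simp
      ring
    rw [heq] at h
    have hneg : (b ^ 2 / (a + 1) ^ 2) * (-(a + 2)) < 0 := by
      apply mul_neg_of_pos_of_neg
      · positivity
      · linarith
    linarith
  have := key (T w)
  rwa [inner_self_eq_zero] at this

/-- Let `A` be a bounded linear operator on a real Hilbert space `H` and `P` a bounded
operator such that `T := PA` is self-adjoint and nonnegative with `N(T) = N(A)`. Suppose
`Ay = f` and `u₀ - y ⟂ N(A)`. Then the solution `u(t)` of `u'(t) = -P(Au(t) - f)`,
`u(0) = u₀`, converges in norm to `y` as `t → ∞`. -/
theorem stmt3 {H : Type*} [NormedAddCommGroup H] [InnerProductSpace ℝ H] [CompleteSpace H]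
    (A P : H →L[ℝ] H) (hsa : IsSelfAdjoint (P ∘L A))
    (hpos : ∀ x : H, 0 ≤ (inner ℝ ((P ∘L A) x) x : ℝ))
    (hker : LinearMap.ker ((P ∘L A) : H →ₗ[ℝ] H) = LinearMap.ker (A : H →ₗ[ℝ] H))
    (f y u₀ : H) (hy : A y = f) (horth : u₀ - y ∈ (LinearMap.ker (A : H →ₗ[ℝ] H))ᗮ)
    (u : ℝ → H) (hu0 : u 0 = u₀)
    (hu : ∀ t : ℝ, HasDerivAt u (-(P (A (u t) - f))) t) :
    Filter.Tendsto u Filter.atTop (nhds y) := by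
  set T : H →L[ℝ] H := P ∘L A with hT
  have hsym : ∀ x z : H, ⟪T x, z⟫ = ⟪x, T z⟫ := fun x z => hsa.isSymmetric x z
  set v : ℝ → H := fun t => u t - y with hvdef
  have hv : ∀ t, HasDerivAt v (-(T (v t))) t := by
    intro t
    have h1 : P (A (u t) - f) = T (v t) := by
      simp only [hvdef, hT, ContinuousLinearMap.comp_apply, map_sub, hy]
    have := (hu t).sub_const y
    rw [h1] at this
    exact this
  -- key semigroup identity
  have hkey : ∀ t s : ℝ, ⟪v t, v s⟫ = ‖v ((t + s) / 2)‖ ^ 2 := by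
    intro t s
    set h : ℝ → ℝ := fun r => ⟪v (t + r), v (s - r)⟫ with hh
    have hd : ∀ r : ℝ, HasDerivAt h 0 r := by
      intro r
      have hf : HasDerivAt (fun r => v (t + r)) (-(T (v (t + r)))) r := by
        simpa [Function.comp_def] using ((hv (t + r)).scomp r ((hasDerivAt_id' r).const_add t))
      have hg : HasDerivAt (fun r => v (s - r)) (T (v (s - r))) r := by
        simpa [Function.comp_def] using ((hv (s - r)).scomp r ((hasDerivAt_id' r).const_sub s))
      have := (hf.inner ℝ hg)
      have heq : ⟪v (t + r), T (v (s - r))⟫ + ⟪-(T (v (t + r))), v (s - r)⟫ = 0 := by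
        rw [inner_neg_left, ← hsym]
        ring
      rwa [heq] at this
    have hconst : h 0 = h ((s - t) / 2) :=
      is_const_of_deriv_eq_zero (fun r => (hd r).differentiableAt)
        (fun r => (hd r).deriv) 0 ((s - t) / 2)
    have e1 : t + (s - t) / 2 = (t + s) / 2 := by ring
    have e2 : s - (s - t) / 2 = (t + s) / 2 := by ring
    simpa [hh, e1, e2, real_inner_self_eq_norm_sq] using hconst
  set N : ℝ → ℝ := fun t => ‖v t‖ ^ 2 with hNdef
  have hN : ∀ t, HasDerivAt N (-(2 * ⟪T (v t), v t⟫)) t := by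
    intro t
    have := (hv t).inner ℝ (hv t)
    have heq : ⟪v t, -(T (v t))⟫ + ⟪-(T (v t)), v t⟫ = -(2 * ⟪T (v t), v t⟫) := by
      rw [inner_neg_left, inner_neg_right, real_inner_comm]
      ring
    rw [heq] at this
    have hNfun : N = fun t => ⟪v t, v t⟫ := by
      funext r; rw [real_inner_self_eq_norm_sq]
    rw [hNfun]
    exact this
  have hNanti : Antitone N :=
    antitone_of_deriv_nonpos (fun t => (hN t).differentiableAt)
      (fun t => by rw [(hN t).deriv]; have := hpos (v t); linarith)
  have hNnonneg : ∀ t, 0 ≤ N t := fun t => sq_nonneg _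
  have hbdd : BddBelow (Set.range N) := ⟨0, by rintro x ⟨t, rfl⟩; exact hNnonneg t⟩
  set L := ⨅ t, N t with hL
  have hNL : Filter.Tendsto N Filter.atTop (𝓝 L) := tendsto_atTop_ciInf hNanti hbdd
  have hLle : ∀ t, L ≤ N t := fun t => ciInf_le hbdd t
  have hcauchy : CauchySeq v := by
    rw [Metric.cauchySeq_iff]
    intro ε hε
    have hev : ∀ᶠ t in Filter.atTop, N t < L + ε ^ 2 / 2 :=
      hNL.eventually (gt_mem_nhds (by nlinarith [pow_pos hε 2]))
    obtain ⟨t₀, ht₀⟩ := Filter.eventually_atTop.mp hev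
    refine ⟨t₀, fun a ha b hb => ?_⟩
    have hsq : ‖v a - v b‖ ^ 2 = N a + N b - 2 * N ((a + b) / 2) := by
      rw [norm_sub_sq_real, hkey a b]; ring
    have h1 : N a < L + ε ^ 2 / 2 := lt_of_le_of_lt (hNanti ha) (ht₀ t₀ le_rfl)
    have h2 : N b < L + ε ^ 2 / 2 := lt_of_le_of_lt (hNanti hb) (ht₀ t₀ le_rfl)
    have h3 : L ≤ N ((a + b) / 2) := hLle _
    have hlt : ‖v a - v b‖ ^ 2 < ε ^ 2 := by rw [hsq]; linarith
    rw [dist_eq_norm]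
    exact lt_of_pow_lt_pow_left₀ 2 hε.le hlt
  obtain ⟨w, hw⟩ := cauchySeq_tendsto_of_complete hcauchy
  have horthv : ∀ z ∈ LinearMap.ker (A : H →ₗ[ℝ] H), ∀ t, ⟪v t, z⟫ = 0 := by
    intro z hz t
    have hz' : z ∈ LinearMap.ker (T : H →ₗ[ℝ] H) := hker.symm ▸ hz
    have hTz : T z = 0 := LinearMap.mem_ker.mp hz'
    have hg : ∀ r : ℝ, HasDerivAt (fun r => ⟪v r, z⟫) 0 r := by
      intro r
      have := (hv r).inner ℝ (hasDerivAt_const r z)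
      have heq : ⟪v r, (0:H)⟫ + ⟪-(T (v r)), z⟫ = 0 := by
        rw [inner_zero_right, inner_neg_left, hsym, hTz, inner_zero_right]
        ring
      rwa [heq] at this
    have hconst : ⟪v t, z⟫ = ⟪v 0, z⟫ :=
      is_const_of_deriv_eq_zero (fun r => (hg r).differentiableAt)
        (fun r => (hg r).deriv) t 0
    have hv0 : v 0 = u₀ - y := by simp [hvdef, hu0]
    rw [hconst, hv0, real_inner_comm]
    exact (Submodule.mem_orthogonal _ _).mp horth z hz
  have horthw : ∀ z ∈ LinearMap.ker (A : H →ₗ[ℝ] H), ⟪w, z⟫ = 0 := by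
    intro z hz
    have h1 : Filter.Tendsto (fun t => ⟪v t, z⟫) Filter.atTop (𝓝 ⟪w, z⟫) :=
      hw.inner tendsto_const_nhds
    have h2 : (fun t => ⟪v t, z⟫) = fun _ : ℝ => (0:ℝ) := funext fun t => horthv z hz t
    rw [h2] at h1
    exact tendsto_nhds_unique h1 tendsto_const_nhds
  have hTvw : Filter.Tendsto (fun t => ⟪T (v t), v t⟫) Filter.atTop (𝓝 ⟪T w, w⟫) :=
    ((T.continuous.tendsto w).comp hw).inner hw
  have hc0 : ⟪T w, w⟫ = 0 := by
    by_contra hc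
    have hcpos : 0 < ⟪T w, w⟫ := lt_of_le_of_ne (hpos w) (Ne.symm hc)
    set c := ⟪T w, w⟫ with hcdef
    have hev : ∀ᶠ t in Filter.atTop, c / 2 < ⟪T (v t), v t⟫ :=
      hTvw.eventually (lt_mem_nhds (by linarith))
    obtain ⟨t₁, ht₁⟩ := Filter.eventually_atTop.mp hev
    set F : ℝ → ℝ := fun t => N t + c * t with hF
    have hFd : ∀ t, HasDerivAt F (-(2 * ⟪T (v t), v t⟫) + c) t := by
      intro t
      have := (hN t).add ((hasDerivAt_id' t).const_mul c)
      rw [mul_one] at this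
      exact this
    have hFanti : AntitoneOn F (Set.Ici t₁) := by
      apply antitoneOn_of_deriv_nonpos (convex_Ici t₁)
      · exact fun x _ => ((hFd x).continuousAt).continuousWithinAt
      · exact fun x _ => ((hFd x).differentiableAt).differentiableWithinAt
      · intro x hx
        rw [interior_Ici] at hx
        rw [(hFd x).deriv]
        have := ht₁ x (le_of_lt hx)
        linarith
    set t₂ : ℝ := t₁ + (N t₁ + 1) / c with ht₂
    have hle : t₁ ≤ t₂ := by
      have h0 : 0 ≤ (N t₁ + 1) / c := by positivity
      rw [ht₂]
      linarith
    have := hFanti (Set.self_mem_Ici) (Set.mem_Ici.mpr hle) hle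
    have hct : c * t₂ = c * t₁ + (N t₁ + 1) := by
      rw [ht₂, mul_add]
      congr 1
      field_simp
    have hNt₂ : 0 ≤ N t₂ := hNnonneg t₂
    simp only [hF] at this
    rw [hct] at this
    linarith
  have hTw : T w = 0 := pos_symm_inner_zero T hsym hpos w hc0
  have hwker : w ∈ LinearMap.ker (A : H →ₗ[ℝ] H) := hker ▸ LinearMap.mem_ker.mpr hTw
  have hw0 : w = 0 := by
    have := horthw w hwker
    rwa [inner_self_eq_zero] at this
  rw [hw0] at hw
  have hfinal : Filter.Tendsto (fun t => v t + y) Filter.atTop (𝓝 (0 + y)) :=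
    hw.add tendsto_const_nhds
  simpa [hvdef] using hfinal
end

section
/- Let A, P be bounded operators on a real Hilbert space with Q := AP self-adjoint and nonnegative. Let u_δ(t) solve u_δ' = -P(Au_δ - f_δ), u_δ(0) = u₀. Then t ↦ ‖Au_δ(t) - f_δ‖ is nonincreasing on [0, ∞). -/
/-- Let `A, P` be bounded operators on a real Hilbert space with `Q := AP` self-adjoint and
nonnegative. Let `u_δ(t)` solve `u_δ' = -P(Au_δ - f_δ)`, `u_δ(0) = u₀`. Then
`t ↦ ‖Au_δ(t) - f_δ‖` is nonincreasing on `[0, ∞)`. -/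
theorem stmt7 {H : Type*} [NormedAddCommGroup H] [InnerProductSpace ℝ H] [CompleteSpace H]
    (A P : H →L[ℝ] H) (hsa : IsSelfAdjoint (A ∘L P))
    (hpos : ∀ x : H, 0 ≤ (inner ℝ ((A ∘L P) x) x : ℝ))
    (fδ u₀ : H) (u : ℝ → H) (hu0 : u 0 = u₀)
    (hu : ∀ t : ℝ, HasDerivAt u (-(P (A (u t) - fδ))) t) :
    AntitoneOn (fun t : ℝ => ‖A (u t) - fδ‖) (Set.Ici (0:ℝ)) := by
  set v : ℝ → H := fun t => A (u t) - fδ with hv_def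
  have hv : ∀ t : ℝ, HasDerivAt v (-((A ∘L P) (v t))) t := by
    intro t
    have h1 : HasDerivAt (fun t => A (u t)) (A (-(P (A (u t) - fδ)))) t :=
      A.hasFDerivAt.comp_hasDerivAt t (hu t)
    have h2 := h1.sub_const fδ
    simpa [hv_def] using h2
  have hg : ∀ t : ℝ, HasDerivAt (fun t => ‖v t‖ ^ 2)
      (-(2 * inner ℝ ((A ∘L P) (v t)) (v t) : ℝ)) t := by
    intro t
    have h : HasDerivAt (fun t => (inner ℝ (v t) (v t) : ℝ))
        (inner ℝ (v t) (-((A ∘L P) (v t))) + inner ℝ (-((A ∘L P) (v t))) (v t)) t :=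
      (hv t).inner ℝ (hv t)
    have heq : (inner ℝ (v t) (-((A ∘L P) (v t))) + inner ℝ (-((A ∘L P) (v t))) (v t) : ℝ)
        = -(2 * inner ℝ ((A ∘L P) (v t)) (v t)) := by
      rw [inner_neg_left, inner_neg_right, real_inner_comm (v t)]
      ring
    rw [heq] at h
    exact h.congr_of_eventuallyEq (Filter.Eventually.of_forall fun s =>
      (real_inner_self_eq_norm_sq (v s)).symm)
  have hmono : AntitoneOn (fun t => ‖v t‖ ^ 2) (Set.Ici (0:ℝ)) := by
    apply antitoneOn_of_deriv_nonpos (convex_Ici 0)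
    · exact fun t _ => ((hg t).continuousAt).continuousWithinAt
    · exact fun t _ => ((hg t).differentiableAt).differentiableWithinAt
    · intro t _
      rw [(hg t).deriv]
      simpa using mul_nonneg (by norm_num : (0:ℝ) ≤ 2) (hpos (v t))
  intro s hs t ht hst
  have h1 : ‖v t‖ ^ 2 ≤ ‖v s‖ ^ 2 := hmono hs ht hst
  exact (pow_le_pow_iff_left₀ (norm_nonneg _) (norm_nonneg _) two_ne_zero).1 h1
end

section
/- Let A, P be bounded operators, T := PA, Q := AP, and let u_δ(t) = e^{-tT}u₀ + ∫₀ᵗ e^{-(t-s)T} P f_δ ds be the solution of u_δ' = -P(Au_δ - f_δ), u_δ(0) = u₀. Then Au_δ(t) - f_δ = e^{-tQ}(Au₀ - f_δ) for all t ≥ 0. -/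
open NormedSpace

/-- DSM residual representation: if `u_δ` solves `u_δ' = -P(Au_δ - f_δ)`, `u_δ(0) = u₀`,
then `Au_δ(t) - f_δ = e^{-tQ}(Au₀ - f_δ)` for all `t ≥ 0`, where `Q := AP`. -/
theorem stmt9 {H : Type*} [NormedAddCommGroup H] [InnerProductSpace ℝ H] [CompleteSpace H]
    (A P : H →L[ℝ] H) (fδ u₀ : H) (u : ℝ → H) (hu0 : u 0 = u₀)
    (hu : ∀ t : ℝ, HasDerivAt u (-(P (A (u t) - fδ))) t) :
    ∀ t : ℝ, 0 ≤ t →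
      A (u t) - fδ = NormedSpace.exp (-(t • (A ∘L P))) (A u₀ - fδ) := by
  set Q : H →L[ℝ] H := A ∘L P with hQ
  set w : ℝ → H := fun t => A (u t) - fδ with hw
  have hwderiv : ∀ t, HasDerivAt w (-(Q (w t))) t := by
    intro t
    have h1 : HasDerivAt (fun s => A (u s)) (A (-(P (A (u t) - fδ)))) t :=
      A.hasFDerivAt.comp_hasDerivAt t (hu t)
    have h2 := h1.sub_const fδ
    convert h2 using 1
    simp [hQ, hw]
  set g : ℝ → H := fun t => exp (t • Q) (w t) with hg
  have hgderiv : ∀ t, HasDerivAt g 0 t := by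
    intro t
    have h1 : HasDerivAt (fun s : ℝ => exp (s • Q)) (exp (t • Q) * Q) t :=
      hasDerivAt_exp_smul_const Q t
    have := h1.clm_apply (hwderiv t)
    convert this using 1
    simp [ContinuousLinearMap.mul_apply]
  have hconst : ∀ t : ℝ, g t = g 0 := by
    intro t
    exact is_const_of_deriv_eq_zero (fun s => (hgderiv s).differentiableAt)
      (fun s => (hgderiv s).deriv) t 0
  intro t _
  have key : g t = A u₀ - fδ := by
    rw [hconst t]
    simp [hg, hw, hu0]
  have comm : Commute (-(t • Q)) (t • Q) := (Commute.refl (t • Q)).neg_left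
  have hinv : exp (-(t • Q)) * exp (t • Q) = 1 := by
    rw [← exp_add_of_commute_of_mem_ball (𝕂 := ℝ) comm
      ((expSeries_radius_eq_top ℝ (H →L[ℝ] H)).symm ▸ edist_lt_top _ _)
      ((expSeries_radius_eq_top ℝ (H →L[ℝ] H)).symm ▸ edist_lt_top _ _), neg_add_cancel, exp_zero]
  calc A (u t) - fδ = (exp (-(t • Q)) * exp (t • Q)) (w t) := by
        rw [hinv]; rfl
    _ = exp (-(t • Q)) (g t) := rfl
    _ = exp (-(t • Q)) (A u₀ - fδ) := by rw [key]
end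

section
/- Let T be a compact self-adjoint nonnegative operator with eigenpairs (λ_j, φ_j), λ_j > 0, and let w₀ = ∑_j w_{0j} φ_j satisfy ∑_j |w_{0j}|² λ_j^{-2} < ∞. Then S(t) := ∑_j λ_j e^{-2λ_j t} |w_{0j}|² = o(1/t²) as t → ∞. -/
lemma cube_exp_le27 (y : ℝ) (hy : 0 ≤ y) : y ^ 3 * Real.exp (-2 * y) ≤ 27 := by
  have h1 : y / 3 ≤ Real.exp (y / 3) := by
    have := Real.add_one_le_exp (y / 3); linarith
  have h2 : y ^ 3 / 27 ≤ Real.exp y := by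
    have h3 : (y / 3) ^ 3 ≤ (Real.exp (y / 3)) ^ 3 :=
      pow_le_pow_left₀ (by positivity) h1 3
    have h4 : (Real.exp (y / 3)) ^ 3 = Real.exp y := by
      rw [← Real.exp_nat_mul]; congr 1; push_cast; ring
    calc y ^ 3 / 27 = (y / 3) ^ 3 := by ring
      _ ≤ (Real.exp (y / 3)) ^ 3 := h3
      _ = Real.exp y := h4
  have h5 : y ^ 3 ≤ 27 * Real.exp y := by linarith
  have he : Real.exp (-2 * y) = Real.exp (-y) * Real.exp (-y) := by
    rw [← Real.exp_add]; ring_nf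
  have hny : Real.exp (-y) ≤ 1 := Real.exp_le_one_iff.mpr (by linarith)
  have hnpos : 0 < Real.exp (-y) := Real.exp_pos _
  have hprod : Real.exp y * Real.exp (-y) = 1 := by
    rw [← Real.exp_add]; simp
  have h6 : y ^ 3 * Real.exp (-y) ≤ 27 := by
    calc y ^ 3 * Real.exp (-y) ≤ 27 * Real.exp y * Real.exp (-y) :=
          mul_le_mul_of_nonneg_right h5 hnpos.le
      _ = 27 * (Real.exp y * Real.exp (-y)) := by ring
      _ = 27 := by rw [hprod]; ring
  calc y ^ 3 * Real.exp (-2 * y) = y ^ 3 * Real.exp (-y) * Real.exp (-y) := by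
        rw [he]; ring
    _ ≤ 27 * 1 := by
        apply mul_le_mul (by exact h6) hny hnpos.le (by norm_num)
    _ = 27 := by norm_num

/-- Let `(λ_j)` be the positive eigenvalues (tending to `0`, as for a compact self-adjoint
nonnegative operator) and `(w_j)` the Fourier coefficients of `w₀` with
`∑ w_j² / λ_j² < ∞`. Then `S(t) := ∑ λ_j e^{-2λ_j t} w_j² = o(1/t²)` as `t → ∞`. -/
theorem stmt12 (lam w : ℕ → ℝ) (hlam : ∀ j, 0 < lam j)
    (hlam0 : Filter.Tendsto lam Filter.atTop (nhds 0))
    (hsum : Summable (fun j => (w j) ^ 2 / (lam j) ^ 2)) :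
    (fun t : ℝ => ∑' j, lam j * Real.exp (-2 * lam j * t) * (w j) ^ 2)
      =o[Filter.atTop] (fun t : ℝ => 1 / t ^ 2) := by
  set A := ∑' j, (w j) ^ 2 / (lam j) ^ 2 with hA
  have hA0 : 0 ≤ A := tsum_nonneg (fun j => by positivity)
  have key : ∀ t : ℝ, 0 < t →
      (∑' j, lam j * Real.exp (-2 * lam j * t) * (w j) ^ 2) ≤ 27 / t ^ 3 * A := by
    intro t ht
    have hterm : ∀ j, lam j * Real.exp (-2 * lam j * t) * (w j) ^ 2
        ≤ 27 / t ^ 3 * ((w j) ^ 2 / (lam j) ^ 2) := by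
      intro j
      have hlj := hlam j
      have h := cube_exp_le27 (lam j * t) (by positivity)
      have h2 : lam j ^ 3 * Real.exp (-2 * lam j * t) ≤ 27 / t ^ 3 := by
        rw [le_div_iff₀ (by positivity)]
        have harg : -2 * lam j * t = -2 * (lam j * t) := by ring
        rw [harg]
        calc lam j ^ 3 * Real.exp (-2 * (lam j * t)) * t ^ 3
            = (lam j * t) ^ 3 * Real.exp (-2 * (lam j * t)) := by ring
          _ ≤ 27 := h
      calc lam j * Real.exp (-2 * lam j * t) * (w j) ^ 2
          = (lam j ^ 3 * Real.exp (-2 * lam j * t)) * ((w j) ^ 2 / (lam j) ^ 2) := by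
            field_simp
        _ ≤ 27 / t ^ 3 * ((w j) ^ 2 / (lam j) ^ 2) :=
            mul_le_mul_of_nonneg_right h2 (by positivity)
    have hs2 : Summable (fun j => 27 / t ^ 3 * ((w j) ^ 2 / (lam j) ^ 2)) :=
      hsum.mul_left _
    have hsummable : Summable (fun j => lam j * Real.exp (-2 * lam j * t) * (w j) ^ 2) :=
      Summable.of_nonneg_of_le (fun j => mul_nonneg (mul_nonneg (hlam j).le (Real.exp_pos _).le) (sq_nonneg _)) hterm hs2
    calc (∑' j, lam j * Real.exp (-2 * lam j * t) * (w j) ^ 2)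
        ≤ ∑' j, 27 / t ^ 3 * ((w j) ^ 2 / (lam j) ^ 2) :=
          Summable.tsum_le_tsum hterm hsummable hs2
      _ = 27 / t ^ 3 * A := by rw [tsum_mul_left]
  rw [Asymptotics.isLittleO_iff]
  intro c hc
  filter_upwards [Filter.eventually_ge_atTop (max 1 (27 * A / c))] with t ht
  have ht1 : (1 : ℝ) ≤ t := le_trans (le_max_left _ _) ht
  have ht0 : (0 : ℝ) < t := lt_of_lt_of_le one_pos ht1
  have htc : 27 * A / c ≤ t := le_trans (le_max_right _ _) ht
  have hcA : 27 * A ≤ c * t := by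
    rw [div_le_iff₀ hc] at htc; linarith
  have hSnn : 0 ≤ ∑' j, lam j * Real.exp (-2 * lam j * t) * (w j) ^ 2 :=
    tsum_nonneg (fun j => mul_nonneg (mul_nonneg (hlam j).le (Real.exp_pos _).le) (sq_nonneg _))
  have hS := key t ht0
  rw [Real.norm_eq_abs, Real.norm_eq_abs, abs_of_nonneg hSnn,
    abs_of_nonneg (by positivity : (0:ℝ) ≤ 1 / t ^ 2)]
  have hfinal : 27 / t ^ 3 * A ≤ c * (1 / t ^ 2) := by
    rw [div_mul_eq_mul_div, div_le_iff₀ (by positivity : (0:ℝ) < t ^ 3)]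
    have : c * (1 / t ^ 2) * t ^ 3 = c * t := by field_simp
    rw [this]; linarith
  linarith
end

section
/- Under the hypotheses: A bounded with finite-rank T := PA = T* ≥ 0, Q := AP = Q* ≥ 0, ‖Au₀ - f_δ‖ > Cδ with C ∈ (1,2), and ‖f_δ - f‖ ≤ δ where Ay = f, the equation ‖Au_δ(t) - f_δ‖ = Cδ has a unique solution t_δ ∈ (0, ∞), where u_δ(t) solves u_δ' = -P(Au_δ - f_δ), u_δ(0) = u₀. -/
open scoped RealInnerProductSpace

section Helpers

variable {H : Type*} [NormedAddCommGroup H] [InnerProductSpace ℝ H]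

/-- For a symmetric positive operator, vanishing of the quadratic form at `x`
forces `Q x = 0`. -/
lemma aux_pos_inner_zero (Q : H →L[ℝ] H)
    (hsym : ∀ x y : H, ⟪Q x, y⟫ = ⟪x, Q y⟫)
    (hpos : ∀ x : H, 0 ≤ ⟪Q x, x⟫) {x : H} (hx : ⟪Q x, x⟫ = 0) :
    Q x = 0 := by
  set a : ℝ := ⟪Q x, Q x⟫ with ha_def
  set c : ℝ := ⟪Q (Q x), Q x⟫ with hc_def
  have ha : 0 ≤ a := real_inner_self_nonneg
  have hc : 0 ≤ c := hpos (Q x)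
  have key : ∀ s : ℝ, 0 ≤ 2 * s * a + s ^ 2 * c := by
    intro s
    have h0 := hpos (x + s • Q x)
    have hexp : ⟪Q (x + s • Q x), x + s • Q x⟫
        = ⟪Q x, x⟫ + s * ⟪Q x, Q x⟫ + s * ⟪Q (Q x), x⟫ + s ^ 2 * c := by
      rw [map_add, map_smul]
      simp only [inner_add_left, inner_add_right, real_inner_smul_left,
        real_inner_smul_right]
      ring
    have hsw : ⟪Q (Q x), x⟫ = a := by
      rw [hsym (Q x) x, real_inner_comm]
    rw [hexp, hsw, hx] at h0
    nlinarith [h0]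
  have hs := key (-(a / (c + 1)))
  have hc1 : (0:ℝ) < c + 1 := by linarith
  have ha0 : a = 0 := by
    have h2 : 0 ≤ (2 * (-(a / (c + 1))) * a + (-(a / (c + 1))) ^ 2 * c) * (c + 1) ^ 2 :=
      mul_nonneg hs (by positivity)
    have h3 : (2 * (-(a / (c + 1))) * a + (-(a / (c + 1))) ^ 2 * c) * (c + 1) ^ 2
        = -(a ^ 2) * (c + 2) := by
      field_simp
      ring
    nlinarith [h2, h3, sq_nonneg a]
  have : (⟪Q x, Q x⟫) = 0 := ha0
  exact inner_self_eq_zero.mp this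

end Helpers

set_option maxHeartbeats 1000000 in
/-- Discrepancy principle for the DSM: under the stated hypotheses the equation
`‖Au_δ(t) - f_δ‖ = Cδ` has a unique positive solution `t_δ`. -/
theorem stmt13 {H : Type*} [NormedAddCommGroup H] [InnerProductSpace ℝ H] [CompleteSpace H]
    (A P : H →L[ℝ] H)
    (hsaT : IsSelfAdjoint (P ∘L A)) (hposT : ∀ x : H, 0 ≤ (inner ℝ ((P ∘L A) x) x : ℝ))
    (hsaQ : IsSelfAdjoint (A ∘L P)) (hposQ : ∀ x : H, 0 ≤ (inner ℝ ((A ∘L P) x) x : ℝ))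
    (hfr : FiniteDimensional ℝ (LinearMap.range ((P ∘L A : H →L[ℝ] H) : H →ₗ[ℝ] H)))
    (hker : LinearMap.ker ((P ∘L A : H →L[ℝ] H) : H →ₗ[ℝ] H) = LinearMap.ker (A : H →ₗ[ℝ] H))
    (f y u₀ fδ : H) (hy : A y = f) (δ C : ℝ) (hδ : 0 < δ) (hC : C ∈ Set.Ioo (1:ℝ) 2)
    (hfδ : ‖fδ - f‖ ≤ δ) (hinit : C * δ < ‖A u₀ - fδ‖)
    (u : ℝ → H) (hu0 : u 0 = u₀)
    (hu : ∀ t : ℝ, HasDerivAt u (-(P (A (u t) - fδ))) t) :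
    ∃! t : ℝ, 0 < t ∧ ‖A (u t) - fδ‖ = C * δ := by
  obtain ⟨hC1, hC2⟩ := hC
  set T : H →L[ℝ] H := P ∘L A with hT_def
  set Q : H →L[ℝ] H := A ∘L P with hQ_def
  have hQsym : ∀ x z : H, ⟪Q x, z⟫ = ⟪x, Q z⟫ := fun x z =>
    (ContinuousLinearMap.isSelfAdjoint_iff_isSymmetric.mp hsaQ) x z
  have hTsym : ∀ x z : H, ⟪T x, z⟫ = ⟪x, T z⟫ := fun x z =>
    (ContinuousLinearMap.isSelfAdjoint_iff_isSymmetric.mp hsaT) x z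
  have hQ0 : ∀ x : H, ⟪Q x, x⟫ = 0 → Q x = 0 := fun x =>
    aux_pos_inner_zero Q hQsym hposQ
  -- kernel of Q as a submodule
  set K : Submodule ℝ H := LinearMap.ker (Q : H →ₗ[ℝ] H) with hK_def
  set W : Submodule ℝ H := Kᗮ with hW_def
  -- range A is orthogonal to ker Q
  -- (h): range A ∩ ker Q = 0
  have hRA_K : ∀ z : H, Q (A z) = 0 → A z = 0 := by
    intro z hz
    have h1 : A (T z) = 0 := by
      have : Q (A z) = A (T z) := by
        simp [hQ_def, hT_def, ContinuousLinearMap.comp_apply]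
      rwa [this] at hz
    have h2 : T (T z) = 0 := by
      have : T (T z) = P (A (T z)) := by
        simp [hT_def, ContinuousLinearMap.comp_apply]
      rw [this, h1, map_zero]
    have h3 : ⟪T z, T z⟫ = 0 := by
      have := hTsym (T z) z
      rw [h2] at this
      simpa [real_inner_comm] using this.symm
    have h4 : T z = 0 := inner_self_eq_zero.mp h3
    have h5 : z ∈ LinearMap.ker (T : H →ₗ[ℝ] H) := h4
    rw [hker] at h5
    exact h5
  -- ker Q² = ker Q
  have hkerQ2 : ∀ x : H, Q (Q x) = 0 → Q x = 0 := by
    intro x hx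
    have h1 : ⟪Q (Q x), x⟫ = ⟪Q x, Q x⟫ := by
      rw [hQsym (Q x) x, real_inner_comm]
    rw [hx] at h1
    simp only [inner_zero_left] at h1
    exact inner_self_eq_zero.mp h1.symm
  -- the finite-dimensional target module
  set M : Submodule ℝ H := Submodule.map (A : H →ₗ[ℝ] H) (LinearMap.range (T : H →ₗ[ℝ] H)) with hM_def
  haveI hfinM : FiniteDimensional ℝ M := by
    have := hfr
    exact Module.Finite.map _ _
  -- range Q is finite dimensional
  have hQQmem : ∀ x : H, Q (Q x) ∈ M := by
    intro x
    refine ⟨T (P x), ⟨P x, rfl⟩, ?_⟩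
    simp [hQ_def, hT_def, ContinuousLinearMap.comp_apply]
  haveI hfinRQ : FiniteDimensional ℝ (LinearMap.range (Q : H →ₗ[ℝ] H)) := by
    let g : (LinearMap.range (Q : H →ₗ[ℝ] H)) →ₗ[ℝ] M :=
      LinearMap.codRestrict M ((Q : H →ₗ[ℝ] H).domRestrict (LinearMap.range (Q : H →ₗ[ℝ] H)))
        (by rintro ⟨x, z, rfl⟩; exact hQQmem z)
    have hginj : Function.Injective g := by
      rw [← LinearMap.ker_eq_bot]
      rw [LinearMap.ker_eq_bot']
      rintro ⟨x, z, rfl⟩ hgx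
      have hx : Q (Q z) = 0 := congrArg Subtype.val hgx
      have : Q z = 0 := hkerQ2 z hx
      exact Subtype.ext this
    exact FiniteDimensional.of_injective g hginj
  -- W = Kᗮ is finite dimensional
  have hKW0 : ∀ x : H, x ∈ K → x ∈ W → x = 0 := by
    intro x hxK hxW
    have h := hxW x hxK
    exact inner_self_eq_zero.mp h
  haveI hfinW : FiniteDimensional ℝ W := by
    let g : W →ₗ[ℝ] (LinearMap.range (Q : H →ₗ[ℝ] H)) :=
      LinearMap.codRestrict (LinearMap.range (Q : H →ₗ[ℝ] H)) ((Q : H →ₗ[ℝ] H).domRestrict W)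
        (by intro x; exact ⟨x, rfl⟩)
    have hginj : Function.Injective g := by
      rw [← LinearMap.ker_eq_bot, LinearMap.ker_eq_bot']
      rintro ⟨x, hxW⟩ hgx
      have hx : Q x = 0 := congrArg Subtype.val hgx
      exact Subtype.ext (hKW0 x hx hxW)
    exact FiniteDimensional.of_injective g hginj
  -- range Q ≤ W
  have hRQ_le_W : LinearMap.range (Q : H →ₗ[ℝ] H) ≤ W := by
    rintro x ⟨z, rfl⟩
    intro k hk
    have hQk : Q k = 0 := hk
    show ⟪k, Q z⟫ = 0
    rw [real_inner_comm, hQsym z k, hQk, inner_zero_right]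
  -- finrank W ≤ finrank range Q
  have hfrW_le : Module.finrank ℝ W ≤ Module.finrank ℝ (LinearMap.range (Q : H →ₗ[ℝ] H)) := by
    let g : W →ₗ[ℝ] (LinearMap.range (Q : H →ₗ[ℝ] H)) :=
      LinearMap.codRestrict (LinearMap.range (Q : H →ₗ[ℝ] H)) ((Q : H →ₗ[ℝ] H).domRestrict W)
        (by intro x; exact ⟨x, rfl⟩)
    have hginj : Function.Injective g := by
      rw [← LinearMap.ker_eq_bot, LinearMap.ker_eq_bot']
      rintro ⟨x, hxW⟩ hgx
      have hx : Q x = 0 := congrArg Subtype.val hgx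
      exact Subtype.ext (hKW0 x hx hxW)
    exact LinearMap.finrank_le_finrank_of_injective hginj
  have hWQ : LinearMap.range (Q : H →ₗ[ℝ] H) = W := Submodule.eq_of_le_of_finrank_le hRQ_le_W hfrW_le
  -- K is closed, hence complete: orthogonal projections exist
  haveI : CompleteSpace K := (ContinuousLinearMap.isClosed_ker Q).completeSpace_coe
  -- range A ≤ W
  have hRA_W : ∀ z : H, A z ∈ W := by
    -- first: finrank (range A) ≤ finrank W via projection onto W
    have hprojinj : Function.Injective
        (W.orthogonalProjectionOnto.toLinearMap.comp
          ((LinearMap.range (A : H →ₗ[ℝ] H)).subtype)) := by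
      rw [← LinearMap.ker_eq_bot, LinearMap.ker_eq_bot']
      rintro ⟨x, z, rfl⟩ hx
      have hx0 : W.orthogonalProjectionOnto (A z) = 0 := hx
      have hxW : A z ∈ Wᗮ := Submodule.orthogonalProjectionOnto_eq_zero_iff.mp hx0
      have hWK : Wᗮ = K := Submodule.orthogonal_orthogonal K
      rw [hWK] at hxW
      have : A z = 0 := hRA_K z hxW
      exact Subtype.ext this
    haveI hfinRA : FiniteDimensional ℝ (LinearMap.range (A : H →ₗ[ℝ] H)) :=
      FiniteDimensional.of_injective _ hprojinj
    have hfrRA_le : Module.finrank ℝ (LinearMap.range (A : H →ₗ[ℝ] H))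
        ≤ Module.finrank ℝ W := LinearMap.finrank_le_finrank_of_injective hprojinj
    have hRQ_le_RA : LinearMap.range (Q : H →ₗ[ℝ] H) ≤ LinearMap.range (A : H →ₗ[ℝ] H) := by
      rintro x ⟨z, rfl⟩
      exact ⟨P z, rfl⟩
    have hfr_eq : Module.finrank ℝ (LinearMap.range (A : H →ₗ[ℝ] H))
        ≤ Module.finrank ℝ (LinearMap.range (Q : H →ₗ[ℝ] H)) := by
      rw [hWQ]; exact hfrRA_le
    have hEq : LinearMap.range (Q : H →ₗ[ℝ] H) = LinearMap.range (A : H →ₗ[ℝ] H) :=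
      Submodule.eq_of_le_of_finrank_le hRQ_le_RA hfr_eq
    intro z
    have : A z ∈ LinearMap.range (A : H →ₗ[ℝ] H) := ⟨z, rfl⟩
    rw [← hEq] at this
    exact hRQ_le_W this
  -- the trajectory
  set v : ℝ → H := fun t => A (u t) - fδ with hv_def
  have hv' : ∀ t : ℝ, HasDerivAt v (-(Q (v t))) t := by
    intro t
    have h1 : HasDerivAt (fun t => A (u t)) (A (-(P (A (u t) - fδ)))) t :=
      (A.hasFDerivAt).comp_hasDerivAt t (hu t)
    have h2 : HasDerivAt v (A (-(P (A (u t) - fδ)))) t := h1.sub_const fδ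
    have h3 : A (-(P (A (u t) - fδ))) = -(Q (v t)) := by
      simp [hQ_def, hv_def, ContinuousLinearMap.comp_apply]
    rwa [h3] at h2
  have hvdiff : Differentiable ℝ v := fun t => (hv' t).differentiableAt
  have hvcont : Continuous v := hvdiff.continuous
  have hv0 : v 0 = A u₀ - fδ := by simp [hv_def, hu0]
  -- projections onto K are conserved
  have hinner_const : ∀ (k : H), k ∈ K → ∀ t : ℝ, ⟪v t, k⟫ = ⟪v 0, k⟫ := by
    intro k hk t
    have hQk : Q k = 0 := hk
    have hderiv : ∀ s : ℝ, HasDerivAt (fun s => ⟪v s, k⟫) 0 s := by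
      intro s
      have := HasDerivAt.inner ℝ (hv' s) (hasDerivAt_const s k)
      simpa [hQsym, hQk] using this
    exact is_const_of_deriv_eq_zero (fun s => (hderiv s).differentiableAt)
      (fun s => (hderiv s).deriv) t 0
  -- κ, the conserved kernel component
  set κ : H := (K.orthogonalProjectionOnto (v 0) : H) with hκ_def
  have hκK : κ ∈ K := (K.orthogonalProjectionOnto (v 0)).2
  have hQκ : Q κ = 0 := hκK
  have hρW : ∀ t : ℝ, v t - κ ∈ W := by
    intro t k hk
    have h1 : ⟪v 0 - κ, k⟫ = 0 := by
      have := K.sub_starProjection_mem_orthogonal (v 0)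
      have h2 := this k hk
      rwa [real_inner_comm] at h2
    have h2 : ⟪v t - κ, k⟫ = ⟪v 0 - κ, k⟫ := by
      simp only [inner_sub_left]
      rw [hinner_const k hk t]
    rw [real_inner_comm]
    rw [h2, h1]
  -- ‖κ‖ ≤ δ
  have hκδ : ‖κ‖ ≤ δ := by
    have hsplit : v 0 = A (u₀ - y) + (f - fδ) := by
      rw [hv0, map_sub, hy]; abel
    have hAW : A (u₀ - y) ∈ Kᗮ := hRA_W (u₀ - y)
    have hproj : K.orthogonalProjectionOnto (v 0) = K.orthogonalProjectionOnto (f - fδ) := by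
      rw [hsplit, map_add,
        Submodule.orthogonalProjectionOnto_apply_of_mem_orthogonal hAW, zero_add]
    have hnorm : ‖κ‖ ≤ ‖f - fδ‖ := by
      rw [hκ_def, hproj]
      have := Submodule.orthogonalProjectionOnto_norm_le K
      calc ‖(K.orthogonalProjectionOnto (f - fδ) : H)‖
          = ‖K.orthogonalProjectionOnto (f - fδ)‖ := rfl
        _ ≤ ‖K.orthogonalProjectionOnto‖ * ‖f - fδ‖ := (K.orthogonalProjectionOnto).le_opNorm _
        _ ≤ 1 * ‖f - fδ‖ := by
            exact mul_le_mul_of_nonneg_right this (norm_nonneg _)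
        _ = ‖f - fδ‖ := one_mul _
    calc ‖κ‖ ≤ ‖f - fδ‖ := hnorm
      _ = ‖fδ - f‖ := norm_sub_rev _ _
      _ ≤ δ := hfδ
  -- antilipschitz bound on W
  obtain ⟨K₀, hK₀, hanti⟩ :
      ∃ K₀ : NNReal, 0 < K₀ ∧ AntilipschitzWith K₀ ((Q : H →ₗ[ℝ] H).domRestrict W) := by
    apply LinearMap.exists_antilipschitzWith
    rw [LinearMap.ker_eq_bot']
    rintro ⟨x, hxW⟩ hx
    exact Subtype.ext (hKW0 x hx hxW)
  have hbound : ∀ t : ℝ, ‖v t - κ‖ ≤ (K₀ : ℝ) * ‖Q (v t)‖ := by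
    intro t
    have h1 := hanti.le_mul_dist ⟨v t - κ, hρW t⟩ 0
    simp only [map_zero, dist_zero_right] at h1
    have h2 : ‖(⟨v t - κ, hρW t⟩ : W)‖ = ‖v t - κ‖ := rfl
    have h3 : ((Q : H →ₗ[ℝ] H).domRestrict W) ⟨v t - κ, hρW t⟩ = Q (v t) - Q κ := by
      simp [LinearMap.domRestrict_apply, map_sub]
    rw [h2, h3, hQκ, sub_zero] at h1
    exact h1
  have hnormv : ∀ t : ℝ, ‖v t‖ ≤ δ + (K₀ : ℝ) * ‖Q (v t)‖ := by
    intro t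
    calc ‖v t‖ = ‖κ + (v t - κ)‖ := by rw [add_sub_cancel]
      _ ≤ ‖κ‖ + ‖v t - κ‖ := norm_add_le _ _
      _ ≤ δ + (K₀ : ℝ) * ‖Q (v t)‖ := add_le_add hκδ (hbound t)
  -- Lyapunov functions
  set ψ : ℝ → ℝ := fun t => ⟪Q (v t), v t⟫ with hψ_def
  set φ : ℝ → ℝ := fun t => ⟪Q (v t), Q (v t)⟫ with hφ_def
  have hQv' : ∀ t : ℝ, HasDerivAt (fun s => Q (v s)) (-(Q (Q (v t)))) t := by
    intro t
    have := (Q.hasFDerivAt).comp_hasDerivAt t (hv' t)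
    rw [map_neg] at this
    exact this
  have hψ' : ∀ t : ℝ, HasDerivAt ψ (-(2 * φ t)) t := by
    intro t
    have := HasDerivAt.inner ℝ (hQv' t) (hv' t)
    have heq : ⟪Q (v t), -(Q (v t))⟫ + ⟪-(Q (Q (v t))), v t⟫ = -(2 * φ t) := by
      have h1 : ⟪Q (Q (v t)), v t⟫ = ⟪Q (v t), Q (v t)⟫ := by
        rw [hQsym (Q (v t)) (v t), real_inner_comm]
      simp only [inner_neg_left, inner_neg_right, h1, hφ_def]
      ring
    rwa [heq] at this
  have hφ' : ∀ t : ℝ, HasDerivAt φ (-(2 * ⟪Q (Q (v t)), Q (v t)⟫)) t := by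
    intro t
    have := HasDerivAt.inner ℝ (hQv' t) (hQv' t)
    have heq : ⟪Q (v t), -(Q (Q (v t)))⟫ + ⟪-(Q (Q (v t))), Q (v t)⟫
        = -(2 * ⟪Q (Q (v t)), Q (v t)⟫) := by
      simp only [inner_neg_left, inner_neg_right]
      rw [real_inner_comm (Q (v t)) (Q (Q (v t)))]
      ring
    rwa [heq] at this
  have hφ_anti : Antitone φ := by
    apply antitone_of_deriv_nonpos (fun t => (hφ' t).differentiableAt)
    intro t
    rw [(hφ' t).deriv]
    have := hposQ (Q (v t))
    linarith
  have hψ_nonneg : ∀ t : ℝ, 0 ≤ ψ t := fun t => hposQ (v t)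
  have hφ_nonneg : ∀ t : ℝ, 0 ≤ φ t := fun t => real_inner_self_nonneg
  -- decay estimate
  have hdecay : ∀ t : ℝ, 0 < t → φ t ≤ ψ 0 / (2 * t) := by
    intro t ht
    obtain ⟨c, hc, hslope⟩ := exists_hasDerivAt_eq_slope ψ (fun s => -(2 * φ s)) ht
      (fun s _ => ((hψ' s).continuousAt.continuousWithinAt))
      (fun s _ => hψ' s)
    have h1 : φ t ≤ φ c := hφ_anti (le_of_lt hc.2)
    have h2 : -(2 * φ c) = (ψ t - ψ 0) / (t - 0) := hslope
    have h3 : φ c = (ψ 0 - ψ t) / (2 * t) := by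
      rw [sub_zero, eq_div_iff (ne_of_gt ht)] at h2
      rw [eq_div_iff (by positivity)]
      linarith
    have h4 : (ψ 0 - ψ t) / (2 * t) ≤ ψ 0 / (2 * t) :=
      (div_le_div_iff_of_pos_right (by linarith : (0:ℝ) < 2 * t)).mpr (by linarith [hψ_nonneg t])
    calc φ t ≤ φ c := h1
      _ = (ψ 0 - ψ t) / (2 * t) := h3
      _ ≤ ψ 0 / (2 * t) := h4
  -- eventual smallness
  have hsmall : ∃ T0 : ℝ, 0 < T0 ∧ ∀ t : ℝ, T0 ≤ t → ‖v t‖ < C * δ := by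
    set ε : ℝ := (C - 1) * δ with hε_def
    have hε : 0 < ε := by nlinarith
    have hψ00 : 0 ≤ ψ 0 := hψ_nonneg 0
    have hT0' : (0:ℝ) < (K₀ : ℝ) ^ 2 * ψ 0 / ε ^ 2 + 1 := by
      have h0 : (0:ℝ) ≤ (K₀ : ℝ) ^ 2 * ψ 0 / ε ^ 2 :=
        div_nonneg (mul_nonneg (sq_nonneg _) hψ00) (sq_nonneg _)
      linarith
    refine ⟨(K₀ : ℝ) ^ 2 * ψ 0 / ε ^ 2 + 1, hT0', ?_⟩
    intro t ht
    have ht0 : (0:ℝ) < t := lt_of_lt_of_le hT0' ht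
    have hQvt : (K₀ : ℝ) * ‖Q (v t)‖ < ε := by
      have h1 : φ t ≤ ψ 0 / (2 * t) := hdecay t ht0
      have hφn : φ t = ‖Q (v t)‖ ^ 2 := real_inner_self_eq_norm_sq _
      have h1' : ‖Q (v t)‖ ^ 2 ≤ ψ 0 / (2 * t) := by rw [← hφn]; exact h1
      have h2 : ((K₀ : ℝ) * ‖Q (v t)‖) ^ 2 ≤ (K₀ : ℝ) ^ 2 * (ψ 0 / (2 * t)) := by
        rw [mul_pow]
        have hK2 : (0:ℝ) ≤ (K₀ : ℝ) ^ 2 := sq_nonneg _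
        nlinarith
      have hdiv : (K₀ : ℝ) ^ 2 * ψ 0 ≤ (t - 1) * ε ^ 2 := by
        have h' : (K₀ : ℝ) ^ 2 * ψ 0 / ε ^ 2 ≤ t - 1 := by linarith
        have := (div_le_iff₀ (pow_pos hε 2)).mp h'
        linarith
      have h3 : (K₀ : ℝ) ^ 2 * (ψ 0 / (2 * t)) < ε ^ 2 := by
        rw [mul_div_assoc', div_lt_iff₀ (by linarith : (0:ℝ) < 2 * t)]
        nlinarith [sq_nonneg ε]
      exact lt_of_pow_lt_pow_left₀ 2 (le_of_lt hε) (lt_of_le_of_lt h2 h3)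
    calc ‖v t‖ ≤ δ + (K₀ : ℝ) * ‖Q (v t)‖ := hnormv t
      _ < δ + ε := by linarith
      _ = C * δ := by rw [hε_def]; ring
  obtain ⟨T0, hT0pos, hT0⟩ := hsmall
  have hvnorm_cont : Continuous fun t => ‖v t‖ := hvcont.norm
  have hv0norm : C * δ < ‖v 0‖ := by rw [hv0]; exact hinit
  have hT0norm : ‖v T0‖ < C * δ := hT0 T0 le_rfl
  -- existence
  have hex : ∃ t : ℝ, 0 < t ∧ ‖v t‖ = C * δ := by
    have hsub : Set.Icc ‖v T0‖ ‖v 0‖ ⊆ (fun t => ‖v t‖) '' Set.Icc 0 T0 :=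
      intermediate_value_Icc' (le_of_lt hT0pos) hvnorm_cont.continuousOn
    have hmem : C * δ ∈ Set.Icc ‖v T0‖ ‖v 0‖ := ⟨le_of_lt hT0norm, le_of_lt hv0norm⟩
    obtain ⟨t, htmem, hteq⟩ := hsub hmem
    refine ⟨t, ?_, hteq⟩
    rcases eq_or_lt_of_le htmem.1 with h | h
    · exfalso
      have h0 : ‖v 0‖ = C * δ := by rw [h]; simpa using hteq
      linarith
    · exact h
  -- uniqueness core
  have huniq : ∀ t₁ t₂ : ℝ, 0 < t₁ → t₁ < t₂ → ‖v t₁‖ = C * δ → ‖v t₂‖ = C * δ → False := by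
    intro t₁ t₂ ht₁ ht12 he1 he2
    set gsq : ℝ → ℝ := fun t => ⟪v t, v t⟫ with hgsq_def
    have hgsq' : ∀ t : ℝ, HasDerivAt gsq (-(2 * ψ t)) t := by
      intro t
      have := HasDerivAt.inner ℝ (hv' t) (hv' t)
      have heq : ⟪v t, -(Q (v t))⟫ + ⟪-(Q (v t)), v t⟫ = -(2 * ψ t) := by
        simp only [inner_neg_left, inner_neg_right, hψ_def]
        rw [real_inner_comm (v t) (Q (v t))]
        ring
      rwa [heq] at this
    have hgsq_anti : Antitone gsq := by
      apply antitone_of_deriv_nonpos (fun t => (hgsq' t).differentiableAt)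
      intro t
      rw [(hgsq' t).deriv]
      linarith [hψ_nonneg t]
    have hgnorm : ∀ t : ℝ, gsq t = ‖v t‖ ^ 2 := fun t => real_inner_self_eq_norm_sq _
    have hg12 : gsq t₁ = gsq t₂ := by rw [hgnorm, hgnorm, he1, he2]
    set m : ℝ := (t₁ + t₂) / 2 with hm_def
    have hm1 : t₁ < m := by rw [hm_def]; linarith
    have hm2 : m < t₂ := by rw [hm_def]; linarith
    have hconst : ∀ s ∈ Set.Ioo t₁ t₂, gsq s = gsq t₁ := by
      intro s hs
      have h1 : gsq s ≤ gsq t₁ := hgsq_anti (le_of_lt hs.1)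
      have h2 : gsq t₂ ≤ gsq s := hgsq_anti (le_of_lt hs.2)
      linarith
    have hev : gsq =ᶠ[nhds m] fun _ => gsq t₁ :=
      Filter.eventuallyEq_of_mem (Ioo_mem_nhds hm1 hm2) hconst
    have hder0 : HasDerivAt gsq 0 m :=
      (hasDerivAt_const m (gsq t₁)).congr_of_eventuallyEq hev
    have hψm : ψ m = 0 := by
      have := (hgsq' m).unique hder0
      linarith
    have hQvm : Q (v m) = 0 := hQ0 (v m) hψm
    -- v is constant from m onwards
    have hfor : ∀ b : ℝ, m ≤ b → v b = v m := by
      intro b hb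
      have hfun : (fun x : H => -(Q x)) = ⇑(-Q) := by
        ext x
        simp
      have hlip : ∀ t : ℝ, LipschitzWith ‖-Q‖₊ fun x : H => -(Q x) := by
        intro t
        rw [hfun]
        exact (-Q).lipschitz
      have key := ODE_solution_unique (v := fun _ x => -(Q x)) (K := ‖-Q‖₊) hlip
        (f := v) (g := fun _ => v m) (a := m) (b := b)
        hvcont.continuousOn
        (fun t _ => (hv' t).hasDerivWithinAt)
        continuousOn_const
        (fun t _ => by
          have h0 : -(Q (v m)) = 0 := by rw [hQvm, neg_zero]
          simpa [h0] using hasDerivWithinAt_const t (Set.Ici t) (v m))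
        rfl
      exact key ⟨hb, le_rfl⟩
    set t₃ : ℝ := max T0 m with ht₃_def
    have h1 : v t₃ = v m := hfor t₃ (le_max_right _ _)
    have h2 : ‖v t₃‖ < C * δ := hT0 t₃ (le_max_left _ _)
    have h3 : ‖v m‖ = C * δ := by
      have hcm := hconst m ⟨hm1, hm2⟩
      rw [hgnorm, hgnorm] at hcm
      have := (sq_eq_sq₀ (norm_nonneg (v m)) (norm_nonneg (v t₁))).mp hcm
      rw [this, he1]
    rw [h1, h3] at h2
    exact lt_irrefl _ h2
  obtain ⟨t, htpos, hteq⟩ := hex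
  refine ⟨t, ⟨htpos, hteq⟩, ?_⟩
  rintro t' ⟨ht'pos, ht'eq⟩
  by_contra hne
  rcases lt_or_gt_of_ne hne with h | h
  · exact huniq t' t ht'pos h ht'eq hteq
  · exact huniq t t' htpos h hteq ht'eq
end

section
/- Let T be bounded self-adjoint nonnegative with h‖T‖ < 2, h > 0, and w₀ ⟂ N(T). Then ‖(I - hT)^n w₀‖ → 0 as n → ∞. -/
open scoped RealInnerProductSpace

set_option maxHeartbeats 1000000

section aux
variable {H : Type*} [NormedAddCommGroup H] [InnerProductSpace ℝ H]

/-- Generalized Cauchy–Schwarz for a symmetric nonnegative operator. -/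
lemma cs_aux (T : H →L[ℝ] H) (hsym : ∀ x y : H, ⟪T x, y⟫ = ⟪x, T y⟫)
    (hpos : ∀ x : H, 0 ≤ ⟪T x, x⟫) (x y : H) :
    ⟪T x, y⟫ ^ 2 ≤ ⟪T x, x⟫ * ⟪T y, y⟫ := by
  have key : ∀ t : ℝ, 0 ≤ ⟪T y, y⟫ * (t * t) + (2 * ⟪T x, y⟫) * t + ⟪T x, x⟫ := by
    intro t
    have h0 := hpos (x + t • y)
    have h1 : ⟪T y, x⟫ = ⟪T x, y⟫ := by rw [hsym y x, real_inner_comm]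
    have expand : ⟪T (x + t • y), x + t • y⟫
        = ⟪T y, y⟫ * (t * t) + (2 * ⟪T x, y⟫) * t + ⟪T x, x⟫ := by
      rw [map_add, map_smul]
      simp only [inner_add_left, inner_add_right, real_inner_smul_left,
        real_inner_smul_right, ContinuousLinearMap.coe_smul', Pi.smul_apply, smul_eq_mul]
      rw [h1]; ring
    linarith [expand ▸ h0]
  have hd := discrim_le_zero key
  rw [discrim] at hd
  nlinarith [hd]

end aux

/-- Let `T` be bounded self-adjoint nonnegative with `h‖T‖ < 2`, `h > 0`, and `w₀ ⟂ N(T)`.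
Then `‖(I - hT)^n w₀‖ → 0` as `n → ∞`. -/
theorem stmt15 {H : Type*} [NormedAddCommGroup H] [InnerProductSpace ℝ H] [CompleteSpace H]
    (T : H →L[ℝ] H) (hsa : IsSelfAdjoint T) (hpos : ∀ x : H, 0 ≤ (inner ℝ (T x) x : ℝ))
    (h : ℝ) (hh : 0 < h) (hT : h * ‖T‖ < 2)
    (w₀ : H) (horth : w₀ ∈ (LinearMap.ker (T : H →ₗ[ℝ] H))ᗮ) :
    Filter.Tendsto (fun n : ℕ => ‖((1 - h • T) ^ n) w₀‖) Filter.atTop (nhds 0) := by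
  set S : H →L[ℝ] H := 1 - h • T with hSdef
  have hsymT : ∀ x y : H, ⟪T x, y⟫ = ⟪x, T y⟫ := fun x y => hsa.isSymmetric x y
  have hSx : ∀ x : H, S x = x - h • T x := by
    intro x; simp [hSdef, ContinuousLinearMap.sub_apply]
  have hSsa : IsSelfAdjoint S := by
    rw [ContinuousLinearMap.isSelfAdjoint_iff_isSymmetric]
    intro x y
    show ⟪S x, y⟫ = ⟪x, S y⟫
    rw [hSx, hSx]
    simp only [inner_sub_left, inner_sub_right, real_inner_smul_left, real_inner_smul_right]
    rw [hsymT x y]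
  -- key Cauchy–Schwarz consequence
  have hCS : ∀ x : H, ‖T x‖ ^ 2 ≤ ‖T‖ * ⟪T x, x⟫ := by
    intro x
    rcases eq_or_ne (T x) 0 with h0 | h0
    · simp [h0]
    · have key := cs_aux T hsymT hpos x (T x)
      have h2 : ⟪T (T x), T x⟫ ≤ ‖T‖ * ‖T x‖ ^ 2 := by
        calc ⟪T (T x), T x⟫ ≤ ‖T (T x)‖ * ‖T x‖ := real_inner_le_norm _ _
          _ ≤ (‖T‖ * ‖T x‖) * ‖T x‖ := by gcongr; exact T.le_opNorm _
          _ = ‖T‖ * ‖T x‖ ^ 2 := by ring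
      have h3 : ⟪T x, T x⟫ = ‖T x‖ ^ 2 := real_inner_self_eq_norm_sq _
      have h4 : 0 < ‖T x‖ := norm_pos_iff.mpr h0
      nlinarith [key, h3, hpos x, mul_le_mul_of_nonneg_left h2 (hpos x), pow_pos h4 2]
  -- S is a contraction
  have hcontr : ∀ x : H, ‖S x‖ ≤ ‖x‖ := by
    intro x
    have hsq : ‖S x‖ ^ 2 = ‖x‖ ^ 2 - 2 * h * ⟪T x, x⟫ + h ^ 2 * ‖T x‖ ^ 2 := by
      rw [hSx, norm_sub_sq_real, real_inner_smul_right, norm_smul, Real.norm_eq_abs,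
        abs_of_pos hh, real_inner_comm]
      ring
    have h1 : h ^ 2 * ‖T x‖ ^ 2 ≤ 2 * h * ⟪T x, x⟫ := by
      have h2 := mul_le_mul_of_nonneg_left (hCS x) (by positivity : (0:ℝ) ≤ h ^ 2)
      have h3 : 0 ≤ h * (2 - h * ‖T‖) * ⟪T x, x⟫ :=
        mul_nonneg (mul_nonneg hh.le (by linarith)) (hpos x)
      nlinarith [h2, h3]
    nlinarith [norm_nonneg (S x), norm_nonneg x]
  -- the decreasing sequence d n = ‖Sⁿ w₀‖²
  set d : ℕ → ℝ := fun n => ‖(S ^ n) w₀‖ ^ 2 with hddef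
  have hpowsucc : ∀ n : ℕ, (S ^ (n + 1)) w₀ = S ((S ^ n) w₀) := by
    intro n; rw [pow_succ', ContinuousLinearMap.mul_apply]
  have hanti : Antitone d := by
    apply antitone_nat_of_succ_le
    intro n
    simp only [hddef, hpowsucc]
    have := hcontr ((S ^ n) w₀)
    nlinarith [norm_nonneg ((S ^ (n)) w₀), norm_nonneg (S ((S ^ n) w₀))]
  have hdnn : ∀ n, 0 ≤ d n := fun n => sq_nonneg _
  have hbdd : BddBelow (Set.range d) := ⟨0, by rintro x ⟨n, rfl⟩; exact hdnn n⟩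
  set L : ℝ := ⨅ n, d n with hLdef
  have hdL : Filter.Tendsto d Filter.atTop (nhds L) := tendsto_atTop_ciInf hanti hbdd
  have hLle : ∀ n, L ≤ d n := fun n => ciInf_le hbdd n
  -- symmetry of powers
  have hmove : ∀ n m : ℕ, ⟪(S ^ n) w₀, (S ^ m) w₀⟫ = ⟪(S ^ (m + n)) w₀, w₀⟫ := by
    intro n m
    have hsymm := (hSsa.pow m).isSymmetric
    calc ⟪(S ^ n) w₀, (S ^ m) w₀⟫ = ⟪(S ^ m) ((S ^ n) w₀), w₀⟫ :=
          (hsymm ((S ^ n) w₀) w₀).symm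
      _ = ⟪(S ^ (m + n)) w₀, w₀⟫ := by rw [pow_add, ContinuousLinearMap.mul_apply]
  have hdinner : ∀ n : ℕ, d n = ⟪(S ^ (2 * n)) w₀, w₀⟫ := by
    intro n
    show ‖(S ^ n) w₀‖ ^ 2 = ⟪(S ^ (2 * n)) w₀, w₀⟫
    rw [← real_inner_self_eq_norm_sq, hmove n n, two_mul]
  -- the sequence u n = S^{2n} w₀ is Cauchy
  set u : ℕ → H := fun n => (S ^ (2 * n)) w₀ with hudef
  have hdiff : ∀ n m : ℕ, ‖u n - u m‖ ^ 2 = d (2 * n) - 2 * d (n + m) + d (2 * m) := by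
    intro n m
    rw [norm_sub_sq_real]
    have h1 : ⟪u n, u m⟫ = d (n + m) := by
      have e : 2 * m + 2 * n = 2 * (n + m) := by ring
      show ⟪(S ^ (2 * n)) w₀, (S ^ (2 * m)) w₀⟫ = d (n + m)
      rw [hmove (2 * n) (2 * m), e, ← hdinner (n + m)]
    rw [h1]
  have hcauchy : CauchySeq u := by
    apply cauchySeq_of_le_tendsto_0 (fun N => Real.sqrt (2 * (d N - L)))
    · intro n m N hn hm
      rw [dist_eq_norm]
      have hnn : 0 ≤ 2 * (d N - L) := by
        have := hLle N; linarith
      rw [show ‖u n - u m‖ = Real.sqrt (‖u n - u m‖ ^ 2) from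
        (Real.sqrt_sq (norm_nonneg _)).symm]
      apply Real.sqrt_le_sqrt
      rw [hdiff]
      have h1 : d (2 * n) ≤ d N := hanti (by omega)
      have h2 : d (2 * m) ≤ d N := hanti (by omega)
      have h3 : L ≤ d (n + m) := hLle _
      linarith
    · have : Filter.Tendsto (fun N => 2 * (d N - L)) Filter.atTop (nhds 0) := by
        have := (hdL.sub_const L).const_mul 2
        simpa using this
      have := this.sqrt
      simpa using this
  obtain ⟨v, hv⟩ := cauchySeq_tendsto_of_complete hcauchy
  -- S² v = v
  have hS2v : (S ^ 2) v = v := by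
    have h1 : Filter.Tendsto (fun n => (S ^ 2) (u n)) Filter.atTop (nhds ((S ^ 2) v)) :=
      ((S ^ 2).continuous.tendsto v).comp hv
    have h2 : ∀ n, (S ^ 2) (u n) = u (n + 1) := by
      intro n
      rw [hudef]
      simp only
      rw [← ContinuousLinearMap.mul_apply, ← pow_add]
      ring_nf
    have h3 : Filter.Tendsto (fun n => u (n + 1)) Filter.atTop (nhds v) :=
      hv.comp (Filter.tendsto_add_atTop_nat 1)
    rw [show (fun n => (S ^ 2) (u n)) = fun n => u (n + 1) from funext h2] at h1
    exact tendsto_nhds_unique h1 h3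
  -- deduce T v = 0
  have hTv : T v = 0 := by
    have hexp : (S ^ 2) v = v - (2 * h) • T v + (h ^ 2) • T (T v) := by
      rw [sq, ContinuousLinearMap.mul_apply, hSx, hSx]
      simp only [map_sub, map_smul]
      module
    rw [hS2v] at hexp
    have heq : (2 * h) • T v = (h ^ 2) • T (T v) := by
      have h5 := hexp
      rw [sub_add, eq_comm, sub_eq_self, sub_eq_zero] at h5
      exact h5
    have hinner : 2 * h * ⟪T v, v⟫ = h ^ 2 * ‖T v‖ ^ 2 := by
      have h5 : ⟪(2 * h) • T v, v⟫ = ⟪(h ^ 2) • T (T v), v⟫ := by rw [heq]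
      rw [real_inner_smul_left, real_inner_smul_left] at h5
      rw [h5, hsymT (T v) v, real_inner_self_eq_norm_sq]
    have hcs := hCS v
    have k0 : (0:ℝ) < 2 - h * ‖T‖ := by linarith
    have k1 : 2 * h * ⟪T v, v⟫ ≤ h ^ 2 * (‖T‖ * ⟪T v, v⟫) := by
      rw [hinner]; exact mul_le_mul_of_nonneg_left hcs (sq_nonneg h)
    have ha : ⟪T v, v⟫ = 0 := by nlinarith [k1, hpos v, mul_pos hh k0]
    have hb : ‖T v‖ ^ 2 = 0 := by nlinarith [hinner, ha, mul_pos hh hh]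
    have : ‖T v‖ = 0 := by nlinarith [norm_nonneg (T v)]
    exact norm_eq_zero.mp this
  -- v ∈ (ker T)ᗮ
  have hSinv : ∀ x : H, x ∈ (LinearMap.ker (T : H →ₗ[ℝ] H))ᗮ → S x ∈ (LinearMap.ker (T : H →ₗ[ℝ] H))ᗮ := by
    intro x hx
    rw [Submodule.mem_orthogonal] at hx ⊢
    intro k hk
    have hk0 : T k = 0 := hk
    have : ⟪k, S x⟫ = ⟪S k, x⟫ := (hSsa.isSymmetric k x).symm
    rw [this, hSx, hk0]
    simpa using hx k hk
  have hpowinv : ∀ n : ℕ, (S ^ n) w₀ ∈ (LinearMap.ker (T : H →ₗ[ℝ] H))ᗮ := by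
    intro n
    induction n with
    | zero => simpa using horth
    | succ n ih => rw [hpowsucc]; exact hSinv _ ih
  have hvmem : v ∈ (LinearMap.ker (T : H →ₗ[ℝ] H))ᗮ := by
    have hclosed : IsClosed ((LinearMap.ker (T : H →ₗ[ℝ] H))ᗮ : Set H) :=
      Submodule.isClosed_orthogonal _
    exact hclosed.mem_of_tendsto hv (Filter.Eventually.of_forall fun n => hpowinv (2 * n))
  -- hence v = 0
  have hv0 : v = 0 := by
    rw [Submodule.mem_orthogonal] at hvmem
    have := hvmem v hTv
    exact inner_self_eq_zero.mp this
  -- conclude d → 0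
  have hd0 : Filter.Tendsto d Filter.atTop (nhds 0) := by
    have h1 : Filter.Tendsto (fun n => ⟪u n, w₀⟫) Filter.atTop (nhds ⟪v, w₀⟫) :=
      hv.inner tendsto_const_nhds
    rw [hv0] at h1
    simp only [inner_zero_left] at h1
    have h2 : ∀ n, d n = ⟪u n, w₀⟫ := fun n => hdinner n
    rw [show d = fun n => ⟪u n, w₀⟫ from funext h2]
    exact h1
  have := hd0.sqrt
  rw [Real.sqrt_zero] at this
  have heq : (fun n : ℕ => ‖((1 - h • T) ^ n) w₀‖) = fun n => Real.sqrt (d n) := by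
    funext n
    rw [hddef]
    simp only
    rw [Real.sqrt_sq (norm_nonneg _)]
  rw [heq]
  exact this
end

section
/- Let A, P be bounded with T := PA = T* ≥ 0, h‖T‖ < 2, N(T) = N(A), Ay = f, u₀ - y ⟂ N(A), ‖f_δ - f‖ ≤ δ. Define u_{n+1} = u_n - hP(Au_n - f_δ), starting from u₀. If n_δ h → ∞ and n_δ h δ → 0 as δ → 0, then ‖u_{n_δ} - y‖ → 0. -/
open Filter

section Aux

variable {H : Type*} [NormedAddCommGroup H] [InnerProductSpace ℝ H] [CompleteSpace H]

lemma cs_form (T : H →L[ℝ] H) (hsa : IsSelfAdjoint T)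
    (hpos : ∀ x : H, 0 ≤ (inner ℝ (T x) x : ℝ)) (x y : H) :
    (inner ℝ (T x) y : ℝ)^2 ≤ (inner ℝ (T x) x : ℝ) * (inner ℝ (T y) y : ℝ) := by
  have hsym : ∀ a b : H, (inner ℝ (T a) b : ℝ) = inner ℝ (T b) a := fun a b =>
    (hsa.isSymmetric a b).trans (real_inner_comm _ _)
  have key : ∀ t : ℝ, 0 ≤ (inner ℝ (T y) y : ℝ) * (t * t) + (2 * inner ℝ (T x) y) * t + inner ℝ (T x) x := by
    intro t
    have h0 := hpos (x + t • y)
    have expand : (inner ℝ (T (x + t • y)) (x + t • y) : ℝ)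
        = (inner ℝ (T y) y : ℝ) * (t * t) + (2 * inner ℝ (T x) y) * t + inner ℝ (T x) x := by
      rw [map_add, map_smul]
      simp only [inner_add_left, inner_add_right, inner_smul_left, inner_smul_right,
        ContinuousLinearMap.coe_smul', Pi.smul_apply, starRingEnd_apply, star_trivial,
        smul_eq_mul]
      rw [hsym y x]
      ring
    linarith [expand ▸ h0]
  have hd := discrim_le_zero key
  rw [discrim] at hd
  nlinarith

lemma norm_sq_le (T : H →L[ℝ] H) (hsa : IsSelfAdjoint T)
    (hpos : ∀ x : H, 0 ≤ (inner ℝ (T x) x : ℝ)) (x : H) :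
    ‖T x‖^2 ≤ ‖T‖ * inner ℝ (T x) x := by
  have hcs := cs_form T hsa hpos x (T x)
  have h1 : (inner ℝ (T x) (T x) : ℝ) = ‖T x‖^2 := real_inner_self_eq_norm_sq _
  have h2 : (inner ℝ (T (T x)) (T x) : ℝ) ≤ ‖T‖ * ‖T x‖^2 := by
    calc (inner ℝ (T (T x)) (T x) : ℝ) ≤ ‖T (T x)‖ * ‖T x‖ := real_inner_le_norm _ _
    _ ≤ (‖T‖ * ‖T x‖) * ‖T x‖ := by
        have := T.le_opNorm (T x)
        nlinarith [norm_nonneg (T x)]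
    _ = ‖T‖ * ‖T x‖^2 := by ring
  rcases eq_or_lt_of_le (norm_nonneg (T x)) with h0 | h0
  · have hTx0 : T x = 0 := by rwa [eq_comm, norm_eq_zero] at h0
    simp [hTx0]
  · have hTx : (0:ℝ) < ‖T x‖^2 := by positivity
    have : (‖T x‖^2)^2 ≤ ((‖T‖ * inner ℝ (T x) x) * ‖T x‖^2) := by
      calc (‖T x‖^2)^2 = (inner ℝ (T x) (T x) : ℝ)^2 := by rw [h1]
      _ ≤ (inner ℝ (T x) x : ℝ) * (inner ℝ (T (T x)) (T x) : ℝ) := hcs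
      _ ≤ (inner ℝ (T x) x : ℝ) * (‖T‖ * ‖T x‖^2) := by
          have := hpos x; nlinarith
      _ = (‖T‖ * inner ℝ (T x) x) * ‖T x‖^2 := by ring
    nlinarith

lemma decrease (T : H →L[ℝ] H) (hsa : IsSelfAdjoint T)
    (hpos : ∀ x : H, 0 ≤ (inner ℝ (T x) x : ℝ)) (h : ℝ) (hh : 0 < h) (hT : h * ‖T‖ < 2) (x : H) :
    ‖x - h • T x‖^2 ≤ ‖x‖^2 - (h * (2 - h * ‖T‖)) * inner ℝ (T x) x := by
  have e1 : ‖x - h • T x‖^2 = ‖x‖^2 - 2 * inner ℝ x (h • T x) + ‖h • T x‖^2 :=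
    norm_sub_sq_real _ _
  have e2 : (inner ℝ x (h • T x) : ℝ) = h * inner ℝ (T x) x := by
    rw [real_inner_smul_right, real_inner_comm]
  have e3 : ‖h • T x‖^2 = h^2 * ‖T x‖^2 := by
    rw [norm_smul]; simp [abs_of_pos hh]; ring
  have e4 := norm_sq_le T hsa hpos x
  rw [e1, e2, e3]
  nlinarith [hpos x, sq_nonneg h]

lemma contract (T : H →L[ℝ] H) (hsa : IsSelfAdjoint T)
    (hpos : ∀ x : H, 0 ≤ (inner ℝ (T x) x : ℝ)) (h : ℝ) (hh : 0 < h) (hT : h * ‖T‖ < 2) (x : H) :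
    ‖x - h • T x‖ ≤ ‖x‖ := by
  have hc : 0 < h * (2 - h * ‖T‖) := by
    have : 0 ≤ h * ‖T‖ := by positivity
    nlinarith
  have := decrease T hsa hpos h hh hT x
  nlinarith [hpos x, norm_nonneg (x - h • T x), norm_nonneg x]

lemma Tpow_tendsto (T : H →L[ℝ] H) (hsa : IsSelfAdjoint T)
    (hpos : ∀ x : H, 0 ≤ (inner ℝ (T x) x : ℝ)) (h : ℝ) (hh : 0 < h) (hT : h * ‖T‖ < 2) (v : H) :
    Tendsto (fun n => ‖T ((((1 : H →L[ℝ] H) - h • T) ^ n) v)‖) atTop (nhds 0) := by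
  set B : H →L[ℝ] H := (1 : H →L[ℝ] H) - h • T with hB
  have hBapp : ∀ z : H, B z = z - h • T z := fun z => rfl
  set x : ℕ → H := fun n => (B ^ n) v with hx
  have hxs : ∀ n, x (n + 1) = B (x n) := by
    intro n
    simp only [hx, pow_succ', ContinuousLinearMap.mul_apply]
  set a : ℕ → ℝ := fun n => ‖x n‖^2 with ha
  have hc : 0 < h * (2 - h * ‖T‖) := by
    have : 0 ≤ h * ‖T‖ := by positivity
    nlinarith
  have hstep : ∀ n, a (n + 1) ≤ a n - (h * (2 - h * ‖T‖)) * inner ℝ (T (x n)) (x n) := by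
    intro n
    have := decrease T hsa hpos h hh hT (x n)
    rw [ha]; simp only [hxs n, hBapp]
    exact this
  have hanti : Antitone a := antitone_nat_of_succ_le fun n => by
    have := hstep n; nlinarith [hpos (x n)]
  have hbdd : BddBelow (Set.range a) := ⟨0, by rintro _ ⟨n, rfl⟩; positivity⟩
  have haconv : Tendsto a atTop (nhds (⨅ n, a n)) := tendsto_atTop_ciInf hanti hbdd
  have hdiff : Tendsto (fun n => a n - a (n + 1)) atTop (nhds 0) := by
    have h2 : Tendsto (fun n => a (n + 1)) atTop (nhds (⨅ n, a n)) :=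
      haconv.comp (tendsto_add_atTop_nat 1)
    simpa using haconv.sub h2
  have hinner : Tendsto (fun n => (inner ℝ (T (x n)) (x n) : ℝ)) atTop (nhds 0) := by
    apply squeeze_zero (fun n => hpos (x n)) (g := fun n => (a n - a (n + 1)) / (h * (2 - h * ‖T‖)))
    · intro n
      rw [le_div_iff₀ hc]
      have := hstep n; nlinarith
    · simpa using hdiff.div_const _
  have hnormsq : Tendsto (fun n => ‖T (x n)‖^2) atTop (nhds 0) := by
    apply squeeze_zero (fun n => by positivity) (fun n => norm_sq_le T hsa hpos (x n))
    simpa using hinner.const_mul ‖T‖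
  have : Tendsto (fun n => Real.sqrt (‖T (x n)‖^2)) atTop (nhds (Real.sqrt 0)) :=
    (Real.continuous_sqrt.tendsto _).comp hnormsq
  simpa only [Real.sqrt_sq (norm_nonneg _), Real.sqrt_zero] using this

lemma ker_eq_orth_range (T : H →L[ℝ] H) (hsa : IsSelfAdjoint T) :
    LinearMap.ker (T : H →ₗ[ℝ] H) = (LinearMap.range (T : H →ₗ[ℝ] H))ᗮ := by
  ext x
  rw [LinearMap.mem_ker, Submodule.mem_orthogonal]
  constructor
  · rintro hx _ ⟨u, rfl⟩
    calc (inner ℝ (T u) x : ℝ) = inner ℝ u (T x) := hsa.isSymmetric u x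
    _ = 0 := by rw [show T x = 0 from hx, inner_zero_right]
  · intro hx
    have h1 : (inner ℝ (T (T x)) x : ℝ) = 0 := hx _ ⟨T x, rfl⟩
    have h2 : (inner ℝ (T x) (T x) : ℝ) = 0 := (hsa.isSymmetric (T x) x).symm.trans h1
    rwa [inner_self_eq_zero] at h2

lemma Bpow_tendsto (T : H →L[ℝ] H) (hsa : IsSelfAdjoint T)
    (hpos : ∀ x : H, 0 ≤ (inner ℝ (T x) x : ℝ)) (h : ℝ) (hh : 0 < h) (hT : h * ‖T‖ < 2)
    (w : H) (hw : w ∈ (LinearMap.ker (T : H →ₗ[ℝ] H))ᗮ) :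
    Tendsto (fun n => ‖(((1 : H →L[ℝ] H) - h • T) ^ n) w‖) atTop (nhds 0) := by
  set B : H →L[ℝ] H := (1 : H →L[ℝ] H) - h • T with hB
  have hBapp : ∀ z : H, B z = z - h • T z := fun z => rfl
  have hcontr : ∀ (n : ℕ) (z : H), ‖(B ^ n) z‖ ≤ ‖z‖ := by
    intro n z
    induction n with
    | zero => simp
    | succ n ih =>
      calc ‖(B ^ (n+1)) z‖ = ‖B ((B ^ n) z)‖ := by
            rw [pow_succ', ContinuousLinearMap.mul_apply]
      _ ≤ ‖(B ^ n) z‖ := contract T hsa hpos h hh hT _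
      _ ≤ ‖z‖ := ih
  have hcomm : Commute B T := by
    apply Commute.sub_left (Commute.one_left T)
    ext z
    simp [ContinuousLinearMap.mul_apply, map_smul]
  have hclos : w ∈ closure ((LinearMap.range (T : H →ₗ[ℝ] H) : Submodule ℝ H) : Set H) := by
    have := ker_eq_orth_range T hsa
    rw [this, Submodule.orthogonal_orthogonal_eq_closure] at hw
    exact hw
  rw [NormedAddCommGroup.tendsto_nhds_zero]
  intro ε hε
  obtain ⟨z, hz, hzd⟩ := Metric.mem_closure_iff.mp hclos (ε / 2) (by linarith)
  obtain ⟨v, rfl⟩ := hz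
  have hTv := Tpow_tendsto T hsa hpos h hh hT v
  rw [NormedAddCommGroup.tendsto_nhds_zero] at hTv
  filter_upwards [hTv (ε / 2) (by linarith)] with n hn
  have hsplit : (B ^ n) w = (B ^ n) (w - T v) + T ((B ^ n) v) := by
    have : (B ^ n) (T v) = T ((B ^ n) v) := by
      have := (hcomm.pow_left n)
      calc (B ^ n) (T v) = ((B ^ n) * T) v := rfl
      _ = (T * (B ^ n)) v := by rw [this]
      _ = T ((B ^ n) v) := rfl
    rw [← this, ← map_add]
    congr 1
    abel
  rw [Real.norm_eq_abs, abs_of_nonneg (norm_nonneg _)] at hn ⊢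
  calc ‖(B ^ n) w‖ ≤ ‖(B ^ n) (w - T v)‖ + ‖T ((B ^ n) v)‖ := by
        rw [hsplit]; exact norm_add_le _ _
  _ ≤ ‖w - T v‖ + ‖T ((B ^ n) v)‖ := by gcongr; exact hcontr n _
  _ < ε / 2 + ε / 2 := by
      have : ‖w - T v‖ < ε / 2 := by rw [dist_eq_norm] at hzd; exact hzd
      linarith
  _ = ε := by ring

end Aux

/-- Discrete DSM iteration `u_{n+1} = u_n - hP(Au_n - f_δ)` with the a priori stopping
rule: if `n_δ h → ∞` and `n_δ h δ → 0` as `δ → 0`, then `‖u_{n_δ} - y‖ → 0`. -/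
theorem stmt16 {H : Type*} [NormedAddCommGroup H] [InnerProductSpace ℝ H] [CompleteSpace H]
    (A P : H →L[ℝ] H) (hsa : IsSelfAdjoint (P ∘L A))
    (hpos : ∀ x : H, 0 ≤ (inner ℝ ((P ∘L A) x) x : ℝ))
    (h : ℝ) (hh : 0 < h) (hT : h * ‖P ∘L A‖ < 2)
    (hker : LinearMap.ker ((P ∘L A : H →L[ℝ] H) : H →ₗ[ℝ] H) = LinearMap.ker (A : H →ₗ[ℝ] H))
    (f y u₀ : H) (hy : A y = f) (horth : u₀ - y ∈ (LinearMap.ker (A : H →ₗ[ℝ] H))ᗮ)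
    (fδ : ℝ → H) (hfδ : ∀ δ : ℝ, 0 < δ → ‖fδ δ - f‖ ≤ δ)
    (u : ℝ → ℕ → H)
    (hu0 : ∀ δ : ℝ, 0 < δ → u δ 0 = u₀)
    (hrec : ∀ δ : ℝ, 0 < δ → ∀ n : ℕ, u δ (n + 1) = u δ n - h • P (A (u δ n) - fδ δ))
    (nδ : ℝ → ℕ)
    (hnδ : Filter.Tendsto (fun δ => (nδ δ : ℝ) * h) (nhdsWithin 0 (Set.Ioi 0)) Filter.atTop)
    (hnδδ : Filter.Tendsto (fun δ => (nδ δ : ℝ) * h * δ) (nhdsWithin 0 (Set.Ioi 0)) (nhds 0)) :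
    Filter.Tendsto (fun δ => ‖u δ (nδ δ) - y‖) (nhdsWithin 0 (Set.Ioi 0)) (nhds 0) := by
  obtain ⟨T, hTdef⟩ : ∃ T : H →L[ℝ] H, T = P ∘L A := ⟨_, rfl⟩
  rw [← hTdef] at hsa hpos hT hker
  obtain ⟨B, hBdef⟩ : ∃ B : H →L[ℝ] H, B = (1 : H →L[ℝ] H) - h • T := ⟨_, rfl⟩
  have hBapp : ∀ z : H, B z = z - h • T z := fun z => by rw [hBdef]; rfl
  have hTapp : ∀ z : H, P (A z) = T z := fun z => by rw [hTdef]; rfl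
  set w₀ : H := u₀ - y with hw₀
  have hbound : ∀ δ : ℝ, 0 < δ → ∀ n : ℕ,
      ‖u δ n - y - (B ^ n) w₀‖ ≤ n * (h * (‖P‖ * δ)) := by
    intro δ hδ n
    induction n with
    | zero => simp [hu0 δ hδ, hw₀]
    | succ n ih =>
      have hrecn := hrec δ hδ n
      have hstep : u δ (n + 1) - y - (B ^ (n + 1)) w₀
          = B (u δ n - y - (B ^ n) w₀) + h • P (fδ δ - f) := by
        have hpow : (B ^ (n + 1)) w₀ = B ((B ^ n) w₀) := by
          rw [pow_succ', ContinuousLinearMap.mul_apply]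
        have key1 : u δ (n + 1) - y = B (u δ n - y) + h • P (fδ δ - f) := by
          rw [hrecn, hBapp]
          have e1 : P (A (u δ n) - fδ δ) = T (u δ n - y) - P (fδ δ - f) := by
            rw [← hTapp, ← map_sub]
            congr 1
            rw [map_sub, hy]
            abel
          rw [e1, smul_sub]
          abel
        rw [key1, hpow]
        conv_rhs => rw [map_sub]
        abel
      calc ‖u δ (n + 1) - y - (B ^ (n + 1)) w₀‖
          ≤ ‖B (u δ n - y - (B ^ n) w₀)‖ + ‖h • P (fδ δ - f)‖ := by
            rw [hstep]; exact norm_add_le _ _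
        _ ≤ ‖u δ n - y - (B ^ n) w₀‖ + h * (‖P‖ * δ) := by
            gcongr
            · rw [hBapp]; exact contract T hsa hpos h hh hT _
            · rw [norm_smul, Real.norm_eq_abs, abs_of_pos hh]
              gcongr
              calc ‖P (fδ δ - f)‖ ≤ ‖P‖ * ‖fδ δ - f‖ := P.le_opNorm _
                _ ≤ ‖P‖ * δ := by gcongr; exact hfδ δ hδ
        _ ≤ n * (h * (‖P‖ * δ)) + h * (‖P‖ * δ) := by gcongr
        _ = (n + 1 : ℕ) * (h * (‖P‖ * δ)) := by push_cast; ring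
  have hw₀mem : w₀ ∈ (LinearMap.ker (T : H →ₗ[ℝ] H))ᗮ := by rw [hker]; exact horth
  have hBpow := Bpow_tendsto T hsa hpos h hh hT w₀ hw₀mem
  rw [← hBdef] at hBpow
  rw [NormedAddCommGroup.tendsto_nhds_zero] at hBpow ⊢
  intro ε hε
  obtain ⟨N, hN⟩ : ∃ N : ℕ, ∀ n ≥ N, ‖(B ^ n) w₀‖ < ε / 2 := by
    have h2 := hBpow (ε / 2) (by linarith)
    rw [Filter.eventually_atTop] at h2
    obtain ⟨N, hN⟩ := h2
    refine ⟨N, fun n hn => ?_⟩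
    have := hN n hn
    rwa [Real.norm_eq_abs, abs_of_nonneg (norm_nonneg _)] at this
  have hev1 : ∀ᶠ δ in nhdsWithin 0 (Set.Ioi 0), (N : ℝ) ≤ (nδ δ : ℝ) := by
    filter_upwards [hnδ.eventually_ge_atTop ((N : ℝ) * h + h)] with δ hδ1
    nlinarith
  have hεP : 0 < ε / (2 * (‖P‖ + 1)) := by positivity
  have hev2 : ∀ᶠ δ in nhdsWithin 0 (Set.Ioi 0), |(nδ δ : ℝ) * h * δ| < ε / (2 * (‖P‖ + 1)) := by
    have h3 := Metric.tendsto_nhds.mp hnδδ _ hεP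
    filter_upwards [h3] with δ hδ3
    rwa [Real.dist_eq, sub_zero] at hδ3
  filter_upwards [hev1, hev2, self_mem_nhdsWithin] with δ h1 h2 h3
  have hδ : 0 < δ := h3
  have hb := hbound δ hδ (nδ δ)
  have tri : ‖u δ (nδ δ) - y‖ ≤ ‖(B ^ (nδ δ)) w₀‖ + (nδ δ : ℝ) * (h * (‖P‖ * δ)) := by
    calc ‖u δ (nδ δ) - y‖ = ‖(u δ (nδ δ) - y - (B ^ (nδ δ)) w₀) + (B ^ (nδ δ)) w₀‖ := by
          rw [sub_add_cancel]
    _ ≤ ‖u δ (nδ δ) - y - (B ^ (nδ δ)) w₀‖ + ‖(B ^ (nδ δ)) w₀‖ := norm_add_le _ _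
    _ ≤ _ := by linarith
  have hN' : ‖(B ^ (nδ δ)) w₀‖ < ε / 2 := hN _ (by exact_mod_cast h1)
  have hp2 : (nδ δ : ℝ) * (h * (‖P‖ * δ)) < ε / 2 := by
    have hx : (nδ δ : ℝ) * (h * (‖P‖ * δ)) = ((nδ δ : ℝ) * h * δ) * ‖P‖ := by ring
    have hnn : 0 ≤ (nδ δ : ℝ) * h * δ := by positivity
    have habs : (nδ δ : ℝ) * h * δ < ε / (2 * (‖P‖ + 1)) := (le_abs_self _).trans_lt h2
    have hb1 : ((nδ δ : ℝ) * h * δ) * ‖P‖ ≤ ((nδ δ : ℝ) * h * δ) * (‖P‖ + 1) := by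
      nlinarith [norm_nonneg P]
    have hb2 : ((nδ δ : ℝ) * h * δ) * (‖P‖ + 1) < (ε / (2 * (‖P‖ + 1))) * (‖P‖ + 1) :=
      mul_lt_mul_of_pos_right habs (by positivity)
    have hb3 : (ε / (2 * (‖P‖ + 1))) * (‖P‖ + 1) = ε / 2 := by
      field_simp
    linarith [hx ▸ (hb1.trans_lt (hb2.trans_eq hb3))]
  rw [Real.norm_eq_abs, abs_of_nonneg (norm_nonneg _)]
  linarith
end
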